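/- Let H be a Hilbert space (over ℝ or ℂ) and T : H → H a bounded linear operator with ‖T‖ ≤ 1. Let Π denote the orthogonal projection of H onto the kernel of (I − T) (a closed subspace). Then the following are equivalent: (a) for every x ∈ H, ‖T^{k+1}x − T^k x‖ → 0 as k → ∞; (b) for every x ∈ H, the sequence T^k x converges to Π x as k → ∞. -/

import Mathlib

open Filter

private lemma aux_orth_le {𝕜 H : Type*} [RCLike 𝕜] [NormedAddCommGroup H] [InnerProductSpace 𝕜 H]
    [CompleteSpace H] (T : H →L[𝕜] H) (hT : ‖T‖ ≤ 1) :
    (LinearMap.ker (((1 : H →L[𝕜] H) - T : H →L[𝕜] H) : H →ₗ[𝕜] H))ᗮ ≤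
      (LinearMap.range (((T - (1 : H →L[𝕜] H)) : H →L[𝕜] H) : H →ₗ[𝕜] H)).topologicalClosure := by
  have h1 : LinearMap.range (((T - (1 : H →L[𝕜] H)) : H →L[𝕜] H) : H →ₗ[𝕜] H) ≤
      ((LinearMap.range (((T - (1 : H →L[𝕜] H)) : H →L[𝕜] H) : H →ₗ[𝕜] H)).topologicalClosure) :=
    Submodule.le_topologicalClosure _
  rw [← Submodule.orthogonal_orthogonal_eq_closure]
  refine Submodule.orthogonal_le ?_
  intro x hx
  have hfix : T x = x := by
    refine eq_of_norm_le_re_inner_eq_norm_sq (𝕜 := 𝕜) ?_ ?_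
    · simpa using T.le_of_opNorm_le hT x
    · have : ∀ y, (inner 𝕜 (T y) x : 𝕜) = inner 𝕜 y x := by
        intro y
        have := hx (T y - y) ⟨y, rfl⟩
        rwa [inner_sub_left, sub_eq_zero] at this
      simp [this, ← norm_sq_eq_re_inner (𝕜 := 𝕜)]
  simp only [LinearMap.mem_ker, ContinuousLinearMap.coe_coe, ContinuousLinearMap.sub_apply, ContinuousLinearMap.one_apply,
    hfix, sub_self]

/-- For a non-expansive bounded linear operator `T` on a Hilbert space,
asymptotic regularity is equivalent to convergence of the powers `T^k x`
to the orthogonal projection of `x` onto `ker (I - T)`. -/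
theorem stmt_0 {𝕜 H : Type*} [RCLike 𝕜] [NormedAddCommGroup H] [InnerProductSpace 𝕜 H]
    [CompleteSpace H] (T : H →L[𝕜] H) (hT : ‖T‖ ≤ 1) :
    (∀ x : H, Tendsto (fun k : ℕ => ‖(T ^ (k + 1)) x - (T ^ k) x‖) atTop (nhds 0)) ↔
      (∀ x : H, Tendsto (fun k : ℕ => (T ^ k) x) atTop
        (nhds (Submodule.orthogonalProjectionOnto (LinearMap.ker (((1 : H →L[𝕜] H) - T : H →L[𝕜] H) : H →ₗ[𝕜] H)) x : H))) := by
  set K := LinearMap.ker (((1 : H →L[𝕜] H) - T : H →L[𝕜] H) : H →ₗ[𝕜] H) with hK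
  have hpownorm : ∀ k : ℕ, ‖T ^ k‖ ≤ 1 := by
    intro k
    rcases Nat.eq_zero_or_pos k with hk | hk
    · rw [hk, pow_zero, ContinuousLinearMap.one_def]
      exact ContinuousLinearMap.norm_id_le
    · exact (norm_pow_le' T hk).trans (pow_le_one₀ (norm_nonneg T) hT)
  constructor
  · intro h x
    set p : H := (Submodule.orthogonalProjectionOnto K x : H) with hp
    have hpK : p ∈ K := (Submodule.orthogonalProjectionOnto K x).2
    have hTp : T p = p := by
      have := hpK
      simp only [hK, LinearMap.mem_ker, ContinuousLinearMap.coe_coe, ContinuousLinearMap.sub_apply,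
        ContinuousLinearMap.one_apply, sub_eq_zero] at this
      exact this.symm
    have hTkp : ∀ k : ℕ, (T ^ k) p = p := by
      intro k
      induction k with
      | zero => simp
      | succ n ih => rw [pow_succ', ContinuousLinearMap.mul_apply, ih, hTp]
    have hy : x - p ∈ Kᗮ := K.sub_starProjection_mem_orthogonal x
    have hyc : x - p ∈ (LinearMap.range (((T - (1 : H →L[𝕜] H)) : H →L[𝕜] H) : H →ₗ[𝕜] H)).topologicalClosure :=
      aux_orth_le T hT hy
    have hy0 : Tendsto (fun k : ℕ => (T ^ k) (x - p)) atTop (nhds 0) := by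
      rw [NormedAddCommGroup.tendsto_nhds_zero]
      intro ε hε
      have hyc' : x - p ∈ closure (LinearMap.range (((T - (1 : H →L[𝕜] H)) : H →L[𝕜] H) : H →ₗ[𝕜] H) : Set H) := hyc
      rw [Metric.mem_closure_iff] at hyc'
      obtain ⟨z, hz, hdz⟩ := hyc' (ε / 2) (by linarith)
      obtain ⟨w, hw⟩ := hz
      have hzk : ∀ k : ℕ, (T ^ k) z = (T ^ (k + 1)) w - (T ^ k) w := by
        intro k
        rw [← hw]
        simp [pow_succ, ContinuousLinearMap.mul_apply, map_sub]
      have := h w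
      rw [Metric.tendsto_atTop] at this
      obtain ⟨N, hN⟩ := this (ε / 2) (by linarith)
      rw [eventually_atTop]
      refine ⟨N, fun k hk => ?_⟩
      have h1 : ‖(T ^ k) (x - p) - (T ^ k) z‖ ≤ ‖(x - p) - z‖ := by
        rw [← map_sub]
        calc ‖(T ^ k) ((x - p) - z)‖ ≤ ‖T ^ k‖ * ‖(x - p) - z‖ :=
              (T ^ k).le_opNorm _
          _ ≤ 1 * ‖(x - p) - z‖ := by
              gcongr
              exact hpownorm k
          _ = ‖(x - p) - z‖ := one_mul _
      have h2 : ‖(T ^ k) z‖ < ε / 2 := by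
        have := hN k hk
        rw [Real.dist_eq, sub_zero] at this
        rw [hzk k]
        calc ‖(T ^ (k + 1)) w - (T ^ k) w‖ = |‖(T ^ (k + 1)) w - (T ^ k) w‖| :=
              (abs_of_nonneg (norm_nonneg _)).symm
          _ < ε / 2 := this
      have hdist : ‖(x - p) - z‖ < ε / 2 := by
        rw [← dist_eq_norm]; exact hdz
      calc ‖(T ^ k) (x - p)‖ ≤ ‖(T ^ k) (x - p) - (T ^ k) z‖ + ‖(T ^ k) z‖ := by
            simpa using norm_add_le ((T ^ k) (x - p) - (T ^ k) z) ((T ^ k) z)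
        _ < ε / 2 + ε / 2 := add_lt_add (h1.trans_lt hdist) h2
        _ = ε := by ring
    have : Tendsto (fun k : ℕ => (T ^ k) (x - p) + p) atTop (nhds (0 + p)) :=
      hy0.add tendsto_const_nhds
    rw [zero_add] at this
    convert this using 2 with k
    rw [map_sub, hTkp k]
    abel
  · intro h x
    have h1 := h x
    have h2 : Tendsto (fun k : ℕ => (T ^ (k + 1)) x) atTop
        (nhds (Submodule.orthogonalProjectionOnto K x : H)) :=
      h1.comp (tendsto_add_atTop_nat 1)
    have h3 : Tendsto (fun k : ℕ => (T ^ (k + 1)) x - (T ^ k) x) atTop (nhds 0) := by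
      have := h2.sub h1
      rw [sub_self] at this
      simpa using this
    simpa using h3.norm
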